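/- arXiv:0911.2356 — 3 statements merged into one kernel-verified Lean document; each statement's English description precedes it below -/
import Mathlib

section
/- If X, Y, Z are jointly Gaussian real random variables with mean zero, then E[YZ e^X] = exp(E[X^2]/2) · (E[YZ] + E[XY]·E[XZ]). -/
section StmtAuxSection

open MeasureTheory ProbabilityTheory Real Filter Set Topology
open scoped NNReal ENNReal

namespace StmtAux

lemma tendsto_mul_exp_neg_mul_sq_atTop {b : ℝ} (hb : 0 < b) :
    Tendsto (fun x : ℝ => x * exp (-b * x ^ 2)) atTop (𝓝 0) := by
  have h := (rpow_mul_exp_neg_mul_sq_isLittleO_exp_neg hb 1).tendsto_zero_of_tendsto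
    (tendsto_exp_atBot.comp <| tendsto_id.const_mul_atTop_of_neg (neg_lt_zero.mpr one_half_pos))
  refine h.congr' ?_
  filter_upwards [eventually_ge_atTop (0:ℝ)] with x hx
  rw [rpow_one]

lemma tendsto_mul_exp_neg_mul_sq_atBot {b : ℝ} (hb : 0 < b) :
    Tendsto (fun x : ℝ => x * exp (-b * x ^ 2)) atBot (𝓝 0) := by
  have h := (tendsto_mul_exp_neg_mul_sq_atTop hb).comp tendsto_neg_atBot_atTop
  have h2 : Tendsto (fun x : ℝ => -(x * exp (-b * x ^ 2))) atBot (𝓝 0) := by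
    refine h.congr fun x => ?_
    simp [neg_mul]
  simpa using h2.neg

lemma integrable_sq_mul_exp_neg_mul_sq {b : ℝ} (hb : 0 < b) :
    Integrable fun x : ℝ => x ^ 2 * exp (-b * x ^ 2) := by
  have := integrable_rpow_mul_exp_neg_mul_sq hb (s := 2) (by norm_num)
  simpa [Real.rpow_two] using this

lemma integral_sq_mul_exp_neg_mul_sq {b : ℝ} (hb : 0 < b) :
    ∫ x : ℝ, x ^ 2 * exp (-b * x ^ 2) = √(π / b) / (2 * b) := by
  have hb' : (2 : ℝ) * b ≠ 0 := by positivity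
  have A : ∀ x : ℝ, HasDerivAt (fun x : ℝ => -(2*b)⁻¹ * (x * exp (-b * x ^ 2)))
      (x ^ 2 * exp (-b * x ^ 2) - (2*b)⁻¹ * exp (-b * x ^ 2)) x := by
    intro x
    have h1 : HasDerivAt (fun x : ℝ => -b * x ^ 2) (-b * (2 * x)) x := by
      simpa using ((hasDerivAt_pow 2 x).const_mul (-b))
    have h2 : HasDerivAt (fun x : ℝ => exp (-b * x ^ 2))
        (exp (-b * x ^ 2) * (-b * (2 * x))) x := h1.exp
    have h3 : HasDerivAt (fun x : ℝ => x * exp (-b * x ^ 2))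
        (1 * exp (-b * x ^ 2) + x * (exp (-b * x ^ 2) * (-b * (2 * x)))) x :=
      (hasDerivAt_id x).mul h2
    have h4 := h3.const_mul (-(2*b)⁻¹)
    refine h4.congr_deriv ?_
    have hinv : (2*b) * (2*b)⁻¹ = 1 := mul_inv_cancel₀ hb'
    linear_combination (x ^ 2 * exp (-b * x ^ 2)) * hinv
  have hint : Integrable (fun x : ℝ => x ^ 2 * exp (-b * x ^ 2) - (2*b)⁻¹ * exp (-b * x ^ 2)) :=
    (integrable_sq_mul_exp_neg_mul_sq hb).sub ((integrable_exp_neg_mul_sq hb).const_mul _)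
  have hbot : Tendsto (fun x : ℝ => -(2*b)⁻¹ * (x * exp (-b * x ^ 2))) atBot (𝓝 0) := by
    simpa using (tendsto_mul_exp_neg_mul_sq_atBot hb).const_mul (-(2*b)⁻¹)
  have htop : Tendsto (fun x : ℝ => -(2*b)⁻¹ * (x * exp (-b * x ^ 2))) atTop (𝓝 0) := by
    simpa using (tendsto_mul_exp_neg_mul_sq_atTop hb).const_mul (-(2*b)⁻¹)
  have key := integral_of_hasDerivAt_of_tendsto A hint hbot htop
  rw [sub_zero] at key
  have := integral_sub (integrable_sq_mul_exp_neg_mul_sq hb)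
    ((integrable_exp_neg_mul_sq hb).const_mul ((2*b)⁻¹))
  rw [this] at key
  rw [integral_const_mul, integral_gaussian] at key
  have : ∫ x : ℝ, x ^ 2 * exp (-b * x ^ 2) = (2*b)⁻¹ * √(π / b) := by linarith
  rw [this, inv_mul_eq_div]


lemma integrable_dirac0 (f : ℝ → ℝ) : Integrable f (MeasureTheory.Measure.dirac (0:ℝ)) := by
  have h : f =ᵐ[MeasureTheory.Measure.dirac (0:ℝ)] fun _ => f 0 := by
    rw [MeasureTheory.ae_dirac_eq]
    exact Filter.eventually_pure.mpr rfl
  exact (integrable_const (f 0)).congr h.symm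

lemma gaussianReal_eq_withDensity (v : ℝ≥0) (hv : v ≠ 0) :
    gaussianReal 0 v
      = volume.withDensity fun x => ((gaussianPDFReal 0 v x).toNNReal : ℝ≥0∞) := by
  rw [gaussianReal_of_var_ne_zero 0 hv]
  rfl

lemma integral_gaussianReal_eq (v : ℝ≥0) (hv : v ≠ 0) (f : ℝ → ℝ) :
    ∫ x, f x ∂(gaussianReal 0 v) = ∫ x, gaussianPDFReal 0 v x * f x := by
  rw [gaussianReal_eq_withDensity v hv,
    integral_withDensity_eq_integral_smul
      ((measurable_gaussianPDFReal 0 v).real_toNNReal) f]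
  congr 1
  ext x
  rw [NNReal.smul_def, smul_eq_mul, Real.coe_toNNReal _ (gaussianPDFReal_nonneg 0 v x)]

lemma integrable_gaussianReal_iff (v : ℝ≥0) (hv : v ≠ 0) (f : ℝ → ℝ) :
    Integrable f (gaussianReal 0 v)
      ↔ Integrable (fun x => gaussianPDFReal 0 v x * f x) volume := by
  rw [gaussianReal_eq_withDensity v hv,
    integrable_withDensity_iff_integrable_smul
      ((measurable_gaussianPDFReal 0 v).real_toNNReal)]
  constructor <;> intro h <;> refine h.congr (Filter.Eventually.of_forall fun x => ?_) <;>
    simp only [NNReal.smul_def, smul_eq_mul,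
      Real.coe_toNNReal _ (gaussianPDFReal_nonneg 0 v x)]

lemma pdf_mul_exp (v : ℝ≥0) (hv : v ≠ 0) (x : ℝ) :
    gaussianPDFReal 0 v x * exp x = exp (v / 2) * gaussianPDFReal (v : ℝ) v x := by
  have hv' : (v : ℝ) ≠ 0 := by exact_mod_cast hv
  simp only [gaussianPDFReal, sub_zero]
  have h : -x ^ 2 / (2 * (v : ℝ)) + x = (v : ℝ) / 2 + -(x - (v:ℝ)) ^ 2 / (2 * (v:ℝ)) := by
    field_simp
    ring
  rw [mul_assoc, ← exp_add, h, exp_add]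
  ring

lemma integrable_exp_gaussianReal (v : ℝ≥0) :
    Integrable (fun x => exp x) (gaussianReal 0 v) := by
  by_cases hv : v = 0
  · rw [hv, gaussianReal_zero_var]
    exact integrable_dirac0 _
  · rw [integrable_gaussianReal_iff v hv]
    have : (fun x => gaussianPDFReal 0 v x * exp x)
        = fun x => exp (v / 2) * gaussianPDFReal (v : ℝ) v x := by
      ext x; exact pdf_mul_exp v hv x
    rw [this]
    exact (integrable_gaussianPDFReal (v : ℝ) v).const_mul _

lemma integral_exp_gaussianReal (v : ℝ≥0) :
    ∫ x, exp x ∂(gaussianReal 0 v) = exp ((v : ℝ) / 2) := by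
  by_cases hv : v = 0
  · rw [hv, gaussianReal_zero_var, integral_dirac]
    simp [hv]
  · rw [integral_gaussianReal_eq v hv]
    have : (fun x => gaussianPDFReal 0 v x * exp x)
        = fun x => exp (v / 2) * gaussianPDFReal (v : ℝ) v x := by
      ext x; exact pdf_mul_exp v hv x
    rw [this, integral_const_mul, integral_gaussianPDFReal_eq_one (v : ℝ) hv, mul_one]

lemma pdf_mul_sq (v : ℝ≥0) (hv : v ≠ 0) (x : ℝ) :
    gaussianPDFReal 0 v x * x ^ 2
      = (√(2 * π * v))⁻¹ * (x ^ 2 * exp (-(2 * (v : ℝ))⁻¹ * x ^ 2)) := by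
  have hv' : (v : ℝ) ≠ 0 := by exact_mod_cast hv
  simp only [gaussianPDFReal, sub_zero]
  have h : -x ^ 2 / (2 * (v:ℝ)) = -(2 * (v:ℝ))⁻¹ * x ^ 2 := by ring
  rw [h]
  ring

lemma integrable_sq_gaussianReal (v : ℝ≥0) :
    Integrable (fun x => x ^ 2) (gaussianReal 0 v) := by
  by_cases hv : v = 0
  · rw [hv, gaussianReal_zero_var]
    exact integrable_dirac0 _
  · rw [integrable_gaussianReal_iff v hv]
    have hv0 : 0 < (v : ℝ) := lt_of_le_of_ne v.coe_nonneg (by exact_mod_cast (Ne.symm hv))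
    have hb : (0 : ℝ) < (2 * (v : ℝ))⁻¹ := by positivity
    have : (fun x => gaussianPDFReal 0 v x * x ^ 2)
        = fun x => (√(2 * π * v))⁻¹ * (x ^ 2 * exp (-(2 * (v : ℝ))⁻¹ * x ^ 2)) := by
      ext x; exact pdf_mul_sq v hv x
    rw [this]
    exact (integrable_sq_mul_exp_neg_mul_sq hb).const_mul _

lemma integral_sq_gaussianReal (v : ℝ≥0) :
    ∫ x, x ^ 2 ∂(gaussianReal 0 v) = (v : ℝ) := by
  by_cases hv : v = 0
  · rw [hv, gaussianReal_zero_var, integral_dirac]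
    simp [hv]
  · rw [integral_gaussianReal_eq v hv]
    have hv0 : 0 < (v : ℝ) := lt_of_le_of_ne v.coe_nonneg (by exact_mod_cast (Ne.symm hv))
    have hb : (0 : ℝ) < (2 * (v : ℝ))⁻¹ := by positivity
    have heq : (fun x => gaussianPDFReal 0 v x * x ^ 2)
        = fun x => (√(2 * π * v))⁻¹ * (x ^ 2 * exp (-(2 * (v : ℝ))⁻¹ * x ^ 2)) := by
      ext x; exact pdf_mul_sq v hv x
    rw [heq, integral_const_mul, integral_sq_mul_exp_neg_mul_sq hb]
    rw [show π / (2 * (v : ℝ))⁻¹ = 2 * π * v by field_simp]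
    rw [show (2 : ℝ) * (2 * (v : ℝ))⁻¹ = (v : ℝ)⁻¹ by field_simp]
    have hsA : √(2 * π * (v:ℝ)) ≠ 0 := by positivity
    have hv' : (v : ℝ) ≠ 0 := by exact_mod_cast hv
    field_simp


lemma exp_abs_bound (u v t₀ c : ℝ) :
    exp (u + t₀*v + c*|v|) ≤ exp (u + (t₀+c)*v) + exp (u + (t₀-c)*v) := by
  rcases abs_cases v with ⟨h, _⟩ | ⟨h, _⟩
  · rw [h, show u + t₀*v + c*v = u + (t₀+c)*v by ring]
    exact le_add_of_nonneg_right (exp_pos _).le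
  · rw [h, show u + t₀*v + c*(-v) = u + (t₀-c)*v by ring]
    exact le_add_of_nonneg_left (exp_pos _).le

lemma abs_le_exp_abs (v : ℝ) : |v| ≤ exp |v| :=
  le_trans (by linarith) (add_one_le_exp |v|)

section Transfer

variable {Ω : Type*} [MeasurableSpace Ω] {μ : Measure Ω}

lemma transfer_exp {L : Ω → ℝ} (hL : Measurable L) {v : ℝ≥0}
    (hmap : μ.map L = gaussianReal 0 v) :
    Integrable (fun ω => exp (L ω)) μ ∧ ∫ ω, exp (L ω) ∂μ = exp ((v : ℝ) / 2) := by
  constructor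
  · have h := integrable_exp_gaussianReal v
    rw [← hmap] at h
    exact (integrable_map_measure continuous_exp.aestronglyMeasurable hL.aemeasurable).mp h
  · rw [← integral_map hL.aemeasurable continuous_exp.aestronglyMeasurable, hmap,
      integral_exp_gaussianReal]

lemma transfer_sq {L : Ω → ℝ} (hL : Measurable L) {v : ℝ≥0}
    (hmap : μ.map L = gaussianReal 0 v) :
    Integrable (fun ω => (L ω) ^ 2) μ ∧ ∫ ω, (L ω) ^ 2 ∂μ = (v : ℝ) := by
  constructor
  · have h := integrable_sq_gaussianReal v
    rw [← hmap] at h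
    exact (integrable_map_measure (continuous_pow 2).aestronglyMeasurable
      hL.aemeasurable).mp h
  · rw [← integral_map hL.aemeasurable (f := fun x : ℝ => x ^ 2)
      (continuous_pow 2).aestronglyMeasurable, hmap, integral_sq_gaussianReal]

lemma key (μ : Measure Ω) [IsProbabilityMeasure μ] (U V : Ω → ℝ)
    (hU : Measurable U) (hV : Measurable V)
    (h : ∀ a b : ℝ, ∃ v : ℝ≥0, μ.map (fun ω => a * U ω + b * V ω) = gaussianReal 0 v) :
    Integrable (fun ω => V ω ^ 2 * exp (U ω)) μ ∧
    ∫ ω, V ω ^ 2 * exp (U ω) ∂μ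
      = exp ((∫ ω, U ω ^ 2 ∂μ) / 2)
        * ((∫ ω, V ω ^ 2 ∂μ) + (∫ ω, U ω * V ω ∂μ) ^ 2) := by
  have hM : ∀ s t : ℝ, Measurable (fun ω => s * U ω + t * V ω) := fun s t =>
    (hU.const_mul s).add (hV.const_mul t)
  have hExp : ∀ s t : ℝ, Integrable (fun ω => exp (s * U ω + t * V ω)) μ := fun s t => by
    obtain ⟨v, hv⟩ := h s t
    exact (transfer_exp (hM s t) hv).1
  have hSq : ∀ s t : ℝ, Integrable (fun ω => (s * U ω + t * V ω) ^ 2) μ := fun s t => by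
    obtain ⟨v, hv⟩ := h s t
    exact (transfer_sq (hM s t) hv).1
  have hUU : Integrable (fun ω => U ω ^ 2) μ := by simpa using hSq 1 0
  have hVV : Integrable (fun ω => V ω ^ 2) μ := by simpa using hSq 0 1
  have hUV : Integrable (fun ω => U ω * V ω) μ := by
    refine Integrable.mono' (hUU.add hVV) ((hU.mul hV).aestronglyMeasurable) ?_
    refine Filter.Eventually.of_forall fun ω => ?_
    simp only [Pi.add_apply, Real.norm_eq_abs, abs_mul]
    nlinarith [sq_nonneg (|U ω| - |V ω|), sq_abs (U ω), sq_abs (V ω), abs_nonneg (U ω),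
      abs_nonneg (V ω)]
  set A := ∫ ω, U ω ^ 2 ∂μ with hA
  set B := ∫ ω, U ω * V ω ∂μ with hB
  set C := ∫ ω, V ω ^ 2 ∂μ with hC
  have hmom : ∀ s t : ℝ, ∫ ω, (s * U ω + t * V ω) ^ 2 ∂μ
      = s^2*A + 2*s*t*B + t^2*C := by
    intro s t
    have hpt : (fun ω => (s * U ω + t * V ω) ^ 2)
        = fun ω => s^2 * (U ω ^ 2) + (2*s*t) * (U ω * V ω) + t^2 * (V ω ^ 2) :=
      funext fun ω => by ring
    have i1 : Integrable (fun ω => s^2 * (U ω ^ 2) + (2*s*t) * (U ω * V ω)) μ :=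
      (hUU.const_mul _).add (hUV.const_mul _)
    have i2 : Integrable (fun ω => t^2 * (V ω ^ 2)) μ := hVV.const_mul _
    have i3 : Integrable (fun ω => s^2 * (U ω ^ 2)) μ := hUU.const_mul _
    have i4 : Integrable (fun ω => (2*s*t) * (U ω * V ω)) μ := hUV.const_mul _
    rw [hpt, integral_add i1 i2, integral_add i3 i4, integral_const_mul, integral_const_mul,
      integral_const_mul]
  have hg : ∀ t : ℝ, ∫ ω, exp (U ω + t * V ω) ∂μ = exp (A/2 + B*t + C/2*t^2) := by
    intro t
    obtain ⟨v, hv⟩ := h 1 t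
    have h1 := (transfer_exp (hM 1 t) hv).2
    have h2 := (transfer_sq (hM 1 t) hv).2
    rw [hmom 1 t] at h2
    simp only [one_mul] at h1
    rw [h1, ← h2]
    congr 1
    ring
  -- first derivative
  have hd1 : ∀ t₀ : ℝ, Integrable (fun ω => V ω * exp (U ω + t₀ * V ω)) μ ∧
      HasDerivAt (fun t => ∫ ω, exp (U ω + t * V ω) ∂μ)
        (∫ ω, V ω * exp (U ω + t₀ * V ω) ∂μ) t₀ := by
    intro t₀
    refine hasDerivAt_integral_of_dominated_loc_of_deriv_le
      (F := fun t ω => exp (U ω + t * V ω)) (F' := fun t ω => V ω * exp (U ω + t * V ω))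
      (bound := fun ω => exp (U ω + (t₀+2) * V ω) + exp (U ω + (t₀-2) * V ω))
      (Metric.ball_mem_nhds _ zero_lt_one) ?_ ?_ ?_ ?_ ?_ ?_
    · exact Filter.Eventually.of_forall fun t =>
        ((hU.add (hV.const_mul t)).exp).aestronglyMeasurable
    · simpa using hExp 1 t₀
    · exact (hV.mul ((hU.add (hV.const_mul t₀)).exp)).aestronglyMeasurable
    · refine Filter.Eventually.of_forall fun ω => fun t ht => ?_
      rw [Real.norm_eq_abs, abs_mul, abs_of_nonneg (exp_pos _).le]
      have htt : |t - t₀| < 1 := by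
        simpa [Real.dist_eq] using Metric.mem_ball.mp ht
      have hstep : |V ω| * exp (U ω + t * V ω) ≤ exp (U ω + t₀ * V ω + 2 * |V ω|) := by
        have h1 : U ω + t * V ω ≤ U ω + t₀ * V ω + |V ω| := by
          have : (t - t₀) * V ω ≤ |V ω| := by
            calc (t - t₀) * V ω ≤ |(t - t₀) * V ω| := le_abs_self _
            _ = |t - t₀| * |V ω| := abs_mul _ _
            _ ≤ 1 * |V ω| := by
              exact mul_le_mul_of_nonneg_right htt.le (abs_nonneg _)
            _ = |V ω| := one_mul _
          linarith
        calc |V ω| * exp (U ω + t * V ω)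
            ≤ exp |V ω| * exp (U ω + t₀ * V ω + |V ω|) :=
              mul_le_mul (abs_le_exp_abs _) (exp_le_exp.mpr h1) (exp_pos _).le (exp_pos _).le
          _ = exp (U ω + t₀ * V ω + 2 * |V ω|) := by rw [← exp_add]; ring_nf
      exact hstep.trans (exp_abs_bound (U ω) (V ω) t₀ 2)
    · have := (hExp 1 (t₀+2)).add (hExp 1 (t₀-2))
      simp only [one_mul] at this
      exact this
    · refine Filter.Eventually.of_forall fun ω => fun t _ => ?_
      have hder : HasDerivAt (fun t : ℝ => U ω + t * V ω) (1 * V ω) t :=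
        ((hasDerivAt_id t).mul_const (V ω)).const_add (U ω)
      simpa [mul_comm] using hder.exp
  -- explicit derivative of mgf
  have hphi : ∀ t : ℝ, HasDerivAt (fun t => exp (A/2 + B*t + C/2*t^2))
      (exp (A/2 + B*t + C/2*t^2) * (B + t*C)) t := by
    intro t
    have h1 : HasDerivAt (fun t : ℝ => A/2 + B*t + C/2*t^2) (B + t*C) t := by
      have := (((hasDerivAt_id t).const_mul B).const_add (A/2)).add
        ((hasDerivAt_pow 2 t).const_mul (C/2))
      refine this.congr_deriv ?_
      simp
      ring
    exact h1.exp
  have hG_eq : ∀ t : ℝ, ∫ ω, V ω * exp (U ω + t * V ω) ∂μ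
      = exp (A/2 + B*t + C/2*t^2) * (B + t*C) := by
    intro t
    have hu := (hd1 t).2
    have hphi' : HasDerivAt (fun t => ∫ ω, exp (U ω + t * V ω) ∂μ)
        (exp (A/2 + B*t + C/2*t^2) * (B + t*C)) t := by
      have h0 := hphi t
      rwa [show (fun t : ℝ => exp (A/2 + B*t + C/2*t^2))
        = fun t => ∫ ω, exp (U ω + t * V ω) ∂μ from funext fun t => (hg t).symm] at h0
    exact hu.unique hphi'
  -- second derivative at 0
  have hd2 : Integrable (fun ω => V ω ^ 2 * exp (U ω + 0 * V ω)) μ ∧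
      HasDerivAt (fun t => ∫ ω, V ω * exp (U ω + t * V ω) ∂μ)
        (∫ ω, V ω ^ 2 * exp (U ω + 0 * V ω) ∂μ) 0 := by
    refine hasDerivAt_integral_of_dominated_loc_of_deriv_le
      (F := fun t ω => V ω * exp (U ω + t * V ω))
      (F' := fun t ω => V ω ^ 2 * exp (U ω + t * V ω))
      (bound := fun ω => exp (U ω + (0+3) * V ω) + exp (U ω + (0-3) * V ω))
      (Metric.ball_mem_nhds _ zero_lt_one) ?_ ?_ ?_ ?_ ?_ ?_
    · exact Filter.Eventually.of_forall fun t =>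
        (hV.mul ((hU.add (hV.const_mul t)).exp)).aestronglyMeasurable
    · exact (hd1 0).1
    · exact ((hV.pow_const 2).mul ((hU.add (hV.const_mul 0)).exp)).aestronglyMeasurable
    · refine Filter.Eventually.of_forall fun ω => fun t ht => ?_
      simp only [Real.norm_eq_abs, abs_mul, abs_of_nonneg (exp_pos _).le, abs_pow]
      have htt : |t| < 1 := by
        simpa [Real.dist_eq] using Metric.mem_ball.mp ht
      have hstep : |V ω| ^ 2 * exp (U ω + t * V ω) ≤ exp (U ω + 0 * V ω + 3 * |V ω|) := by
        have h1 : U ω + t * V ω ≤ U ω + 0 * V ω + |V ω| := by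
          have : t * V ω ≤ |V ω| := by
            calc t * V ω ≤ |t * V ω| := le_abs_self _
            _ = |t| * |V ω| := abs_mul _ _
            _ ≤ 1 * |V ω| := mul_le_mul_of_nonneg_right htt.le (abs_nonneg _)
            _ = |V ω| := one_mul _
          linarith
        have h2 : |V ω| ^ 2 ≤ exp (2 * |V ω|) := by
          have := pow_le_pow_left₀ (abs_nonneg (V ω)) (abs_le_exp_abs (V ω)) 2
          calc |V ω| ^ 2 ≤ (exp |V ω|) ^ 2 := this
          _ = exp (2 * |V ω|) := by rw [← exp_nat_mul]; norm_num
        calc |V ω| ^ 2 * exp (U ω + t * V ω)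
            ≤ exp (2 * |V ω|) * exp (U ω + 0 * V ω + |V ω|) :=
              mul_le_mul h2 (exp_le_exp.mpr h1) (exp_pos _).le (exp_pos _).le
          _ = exp (U ω + 0 * V ω + 3 * |V ω|) := by rw [← exp_add]; ring_nf
      exact hstep.trans (exp_abs_bound (U ω) (V ω) 0 3)
    · have := (hExp 1 ((0:ℝ)+3)).add (hExp 1 ((0:ℝ)-3))
      simp only [one_mul] at this
      exact this
    · refine Filter.Eventually.of_forall fun ω => fun t _ => ?_
      have hder : HasDerivAt (fun t : ℝ => U ω + t * V ω) (1 * V ω) t :=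
        ((hasDerivAt_id t).mul_const (V ω)).const_add (U ω)
      have := (hder.exp).const_mul (V ω)
      refine this.congr_deriv ?_
      ring
  -- derivative of explicit RHS
  have hpsi : HasDerivAt (fun t => exp (A/2 + B*t + C/2*t^2) * (B + t*C))
      (exp (A/2) * (C + B^2)) 0 := by
    have h2 : HasDerivAt (fun t : ℝ => B + t*C) C 0 := by
      simpa using ((hasDerivAt_id (0:ℝ)).mul_const C).const_add B
    have := (hphi 0).mul h2
    refine this.congr_deriv ?_
    simp
    ring
  have hG_deriv : HasDerivAt (fun t => ∫ ω, V ω * exp (U ω + t * V ω) ∂μ)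
      (exp (A/2) * (C + B^2)) 0 := by
    have h0 := hpsi
    rwa [show (fun t : ℝ => exp (A/2 + B*t + C/2*t^2) * (B + t*C))
      = fun t => ∫ ω, V ω * exp (U ω + t * V ω) ∂μ from funext fun t => (hG_eq t).symm] at h0
  have hfinal : ∫ ω, V ω ^ 2 * exp (U ω + 0 * V ω) ∂μ = exp (A/2) * (C + B^2) :=
    (hd2.2).unique hG_deriv
  have hsimp : (fun ω => V ω ^ 2 * exp (U ω + 0 * V ω)) = fun ω => V ω ^ 2 * exp (U ω) := by
    funext ω; simp
  constructor
  · have := hd2.1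
    rwa [hsimp] at this
  · rw [hsimp] at hfinal
    exact hfinal

end Transfer

end StmtAux


end StmtAuxSection

open MeasureTheory ProbabilityTheory

/-- If X, Y, Z are jointly Gaussian real random variables with mean zero, then
`E[YZ e^X] = exp(E[X^2]/2) * (E[YZ] + E[XY]E[XZ])`. Joint Gaussianity (centered)
is expressed by: every linear combination has a centered Gaussian distribution. -/
theorem stmt1 {Ω : Type*} [MeasurableSpace Ω] (μ : Measure Ω) [IsProbabilityMeasure μ]
    (X Y Z : Ω → ℝ) (hX : Measurable X) (hY : Measurable Y) (hZ : Measurable Z)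
    (hGauss : ∀ a b c : ℝ, ∃ v : NNReal,
      μ.map (fun ω => a * X ω + b * Y ω + c * Z ω) = gaussianReal 0 v) :
    ∫ ω, Y ω * Z ω * Real.exp (X ω) ∂μ
      = Real.exp ((∫ ω, X ω ^ 2 ∂μ) / 2)
        * ((∫ ω, Y ω * Z ω ∂μ) + (∫ ω, X ω * Y ω ∂μ) * ∫ ω, X ω * Z ω ∂μ) := by
  have hP := StmtAux.key μ X (fun ω => Y ω + Z ω) hX (hY.add hZ) (fun a b => by
    obtain ⟨v, hv⟩ := hGauss a b b
    exact ⟨v, by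
      rw [show (fun ω => a * X ω + b * (Y ω + Z ω))
        = fun ω => a * X ω + b * Y ω + b * Z ω from funext fun ω => by ring]
      exact hv⟩)
  have hMn := StmtAux.key μ X (fun ω => Y ω - Z ω) hX (hY.sub hZ) (fun a b => by
    obtain ⟨v, hv⟩ := hGauss a b (-b)
    exact ⟨v, by
      rw [show (fun ω => a * X ω + b * (Y ω - Z ω))
        = fun ω => a * X ω + b * Y ω + (-b) * Z ω from funext fun ω => by ring]
      exact hv⟩)
  have hSq : ∀ a b c : ℝ, Integrable (fun ω => (a * X ω + b * Y ω + c * Z ω) ^ 2) μ := by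
    intro a b c
    obtain ⟨v, hv⟩ := hGauss a b c
    exact (StmtAux.transfer_sq
      (((hX.const_mul a).add (hY.const_mul b)).add (hZ.const_mul c)) hv).1
  have hXX : Integrable (fun ω => X ω ^ 2) μ := by simpa using hSq 1 0 0
  have hYY : Integrable (fun ω => Y ω ^ 2) μ := by simpa using hSq 0 1 0
  have hZZ : Integrable (fun ω => Z ω ^ 2) μ := by simpa using hSq 0 0 1
  have prod_int : ∀ (f g : Ω → ℝ), Measurable f → Measurable g →
      Integrable (fun ω => f ω ^ 2) μ → Integrable (fun ω => g ω ^ 2) μ →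
      Integrable (fun ω => f ω * g ω) μ := by
    intro f g hf hg h1 h2
    refine Integrable.mono' (h1.add h2) ((hf.mul hg).aestronglyMeasurable) ?_
    refine Filter.Eventually.of_forall fun ω => ?_
    simp only [Pi.add_apply, Real.norm_eq_abs, abs_mul]
    nlinarith [sq_nonneg (|f ω| - |g ω|), sq_abs (f ω), sq_abs (g ω), abs_nonneg (f ω),
      abs_nonneg (g ω)]
  have hXY := prod_int X Y hX hY hXX hYY
  have hXZ := prod_int X Z hX hZ hXX hZZ
  have hYZ := prod_int Y Z hY hZ hYY hZZ
  have eP2 : ∫ ω, (Y ω + Z ω) ^ 2 ∂μ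
      = (∫ ω, Y ω ^ 2 ∂μ) + 2 * (∫ ω, Y ω * Z ω ∂μ) + ∫ ω, Z ω ^ 2 ∂μ := by
    have hpt : (fun ω => (Y ω + Z ω) ^ 2)
        = fun ω => Y ω ^ 2 + 2 * (Y ω * Z ω) + Z ω ^ 2 := funext fun ω => by ring
    have i1 : Integrable (fun ω => Y ω ^ 2 + 2 * (Y ω * Z ω)) μ := hYY.add (hYZ.const_mul _)
    rw [hpt, integral_add i1 hZZ, integral_add hYY (hYZ.const_mul _), integral_const_mul]
  have eM2 : ∫ ω, (Y ω - Z ω) ^ 2 ∂μ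
      = (∫ ω, Y ω ^ 2 ∂μ) + (-2) * (∫ ω, Y ω * Z ω ∂μ) + ∫ ω, Z ω ^ 2 ∂μ := by
    have hpt : (fun ω => (Y ω - Z ω) ^ 2)
        = fun ω => Y ω ^ 2 + (-2) * (Y ω * Z ω) + Z ω ^ 2 := funext fun ω => by ring
    have i1 : Integrable (fun ω => Y ω ^ 2 + (-2) * (Y ω * Z ω)) μ := hYY.add (hYZ.const_mul _)
    rw [hpt, integral_add i1 hZZ, integral_add hYY (hYZ.const_mul _), integral_const_mul]
  have eP1 : ∫ ω, X ω * (Y ω + Z ω) ∂μ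
      = (∫ ω, X ω * Y ω ∂μ) + ∫ ω, X ω * Z ω ∂μ := by
    have hpt : (fun ω => X ω * (Y ω + Z ω)) = fun ω => X ω * Y ω + X ω * Z ω :=
      funext fun ω => by ring
    rw [hpt, integral_add hXY hXZ]
  have eM1 : ∫ ω, X ω * (Y ω - Z ω) ∂μ
      = (∫ ω, X ω * Y ω ∂μ) - ∫ ω, X ω * Z ω ∂μ := by
    have hpt : (fun ω => X ω * (Y ω - Z ω)) = fun ω => X ω * Y ω - X ω * Z ω :=
      funext fun ω => by ring
    rw [hpt, integral_sub hXY hXZ]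
  have hmain : ∫ ω, Y ω * Z ω * Real.exp (X ω) ∂μ
      = ((∫ ω, (Y ω + Z ω) ^ 2 * Real.exp (X ω) ∂μ)
          - ∫ ω, (Y ω - Z ω) ^ 2 * Real.exp (X ω) ∂μ) / 4 := by
    have hpt : (fun ω => Y ω * Z ω * Real.exp (X ω))
        = fun ω => ((Y ω + Z ω) ^ 2 * Real.exp (X ω)
            - (Y ω - Z ω) ^ 2 * Real.exp (X ω)) / 4 := funext fun ω => by ring
    rw [hpt, integral_div, integral_sub hP.1 hMn.1]
  rw [hmain, hP.2, hMn.2, eP2, eM2, eP1, eM1]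
  ring
end

section
/- Let H be a real Hilbert space, S a nonnegative self-adjoint operator, A a skew-adjoint operator on H with common dense domain, G = −S + A, and λ > 0. Then for any φ in the domain, (φ, (λ − G)^{-1} φ) ≤ (φ, (λ + S)^{-1} φ). -/
open scoped RealInnerProductSpace

/-- Resolvent upper bound: for `S ≥ 0` symmetric, `A` skew-symmetric, `G = -S + A`, `λ > 0`,
if `χ = (λ - G)⁻¹ φ` and `θ = (λ + S)⁻¹ φ`, then `(φ, (λ-G)⁻¹φ) ≤ (φ, (λ+S)⁻¹φ)`. -/
theorem stmt12 {H : Type*} [NormedAddCommGroup H] [InnerProductSpace ℝ H]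
    (S A : H →L[ℝ] H)
    (hS_sym : ∀ x y : H, ⟪S x, y⟫ = ⟪x, S y⟫)
    (hS_pos : ∀ x : H, 0 ≤ ⟪S x, x⟫)
    (hA_skew : ∀ x y : H, ⟪A x, y⟫ = -⟪x, A y⟫)
    (l : ℝ) (hl : 0 < l) (φ χ θ : H)
    (hχ : l • χ - (-S + A) χ = φ)
    (hθ : l • θ + S θ = φ) :
    ⟪φ, χ⟫ ≤ ⟪φ, θ⟫ := by
  have hAχ : ⟪A χ, χ⟫ = 0 := by
    have h1 := hA_skew χ χ
    have h2 : ⟪χ, A χ⟫ = ⟪A χ, χ⟫ := real_inner_comm _ _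
    linarith
  have h1 : ⟪φ, θ⟫ = l * ⟪θ, θ⟫ + ⟪S θ, θ⟫ := by
    rw [← hθ]; simp [inner_add_left, real_inner_smul_left]
  have h2 : ⟪φ, χ⟫ = l * ⟪θ, χ⟫ + ⟪S θ, χ⟫ := by
    rw [← hθ]; simp [inner_add_left, real_inner_smul_left]
  have h3 : ⟪φ, χ⟫ = l * ⟪χ, χ⟫ + ⟪S χ, χ⟫ := by
    rw [← hχ]
    simp [inner_sub_left, inner_add_left, real_inner_smul_left,
      ContinuousLinearMap.add_apply, ContinuousLinearMap.neg_apply, hAχ]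
  have hsym : ⟪S χ, θ⟫ = ⟪S θ, χ⟫ := by rw [hS_sym χ θ, real_inner_comm]
  have hpos := hS_pos (θ - χ)
  have e1 : ⟪S (θ - χ), θ - χ⟫ = ⟪S θ, θ⟫ - 2 * ⟪S θ, χ⟫ + ⟪S χ, χ⟫ := by
    simp only [map_sub, inner_sub_left, inner_sub_right, hsym]; ring
  have hpos2 : (0:ℝ) ≤ ⟪θ - χ, θ - χ⟫ := real_inner_self_nonneg
  have e2 : ⟪θ - χ, θ - χ⟫ = ⟪θ, θ⟫ - 2 * ⟪θ, χ⟫ + ⟪χ, χ⟫ := by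
    simp only [inner_sub_left, inner_sub_right, real_inner_comm θ χ]; ring
  have hmul : 0 ≤ l * ⟪θ - χ, θ - χ⟫ := mul_nonneg hl.le hpos2
  nlinarith [hmul, hpos, e1, e2]
end

section
/- Let −1 < α < 1 and let b̂ : ℝ → [0,∞) be integrable with b̂(p) ≤ 2C₁|p|^α for |p| < δ (δ > 0, C₁ < ∞). Define K(λ,p) := (1/√(2π)) ∫_ℝ b̂(q−p)/(λ + q²/2) dq. Then there exists C < ∞ such that for all sufficiently small λ > 0 and all |p| < √λ, K(λ,p) ≤ C λ^{(α−1)/2}. -/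
open MeasureTheory

set_option maxHeartbeats 1000000 in
/-- Upper bound on `K(λ,p) = (2π)^{-1/2} ∫ b̂(q-p)/(λ+q²/2) dq`: if `b̂ ≥ 0` is integrable
with `b̂(p) ≤ 2C₁|p|^α` for `|p| < δ` (`-1 < α < 1`), then there is `C < ∞` with
`K(λ,p) ≤ C λ^{(α-1)/2}` for all sufficiently small `λ > 0` and all `|p| < √λ`. -/
theorem stmt16 (α : ℝ) (hα₁ : -1 < α) (hα₂ : α < 1)
    (bhat : ℝ → ℝ) (h_meas : Measurable bhat) (h_nonneg : ∀ p, 0 ≤ bhat p)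
    (h_int : Integrable bhat)
    (C₁ δ : ℝ) (hδ : 0 < δ)
    (h_bound : ∀ p : ℝ, |p| < δ → bhat p ≤ 2 * C₁ * |p| ^ α) :
    ∃ C : ℝ, ∃ l₀ : ℝ, 0 < l₀ ∧ ∀ l : ℝ, 0 < l → l < l₀ →
      ∀ p : ℝ, |p| < Real.sqrt l →
        (Real.sqrt (2 * Real.pi))⁻¹ * ∫ q : ℝ, bhat (q - p) / (l + q ^ 2 / 2)
          ≤ C * l ^ ((α - 1) / 2) := by
  have hC₁ : 0 ≤ C₁ := by
    have h1 := h_nonneg (δ / 2)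
    have h2 := h_bound (δ / 2) (by rw [abs_of_pos (by positivity)]; linarith)
    have h3 : (0:ℝ) < |δ / 2| ^ α := Real.rpow_pos_of_pos (by positivity) α
    nlinarith
  have hBint : 0 ≤ ∫ x, bhat x := integral_nonneg h_nonneg
  refine ⟨4 * C₁ * 3 ^ (α + 1) / (α + 1) + 16 * C₁ * 2 ^ (α - 1) / (1 - α)
      + (8 / δ ^ 2) * ∫ x, bhat x,
    min (δ ^ 2 / 16) 1, by positivity, ?_⟩
  intro l hl hll p hp
  set a := Real.sqrt l with ha_def
  have ha : 0 < a := Real.sqrt_pos.mpr hl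
  have hal : a ^ 2 = l := Real.sq_sqrt hl.le
  have hl1 : l < 1 := lt_of_lt_of_le hll (min_le_right _ _)
  have ha4 : a ≤ δ / 4 := by
    have h16 : l ≤ δ ^ 2 / 16 := le_of_lt (lt_of_lt_of_le hll (min_le_left _ _))
    calc a ≤ Real.sqrt (δ ^ 2 / 16) := Real.sqrt_le_sqrt h16
      _ = δ / 4 := by
          rw [show δ ^ 2 / 16 = (δ / 4) ^ 2 by ring, Real.sqrt_sq (by positivity)]
  -- the three majorant pieces
  set H : ℝ → ℝ := (Set.Ioc 0 (3 * a)).indicator (fun t => 2 * C₁ / l * t ^ α) with hH_def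
  set G : ℝ → ℝ := (Set.Ioi (2 * a)).indicator (fun x => 8 * C₁ * x ^ (α - 2)) with hG_def
  have hHnn : ∀ t, 0 ≤ H t := fun t =>
    Set.indicator_nonneg (fun x hx => by
      have : (0:ℝ) ≤ x ^ α := Real.rpow_nonneg (le_of_lt hx.1) α
      positivity) t
  have hGnn : ∀ x, 0 ≤ G x := fun x =>
    Set.indicator_nonneg (fun y hy => by
      have hy0 : (0:ℝ) < y := lt_trans (by positivity) hy
      have : (0:ℝ) ≤ y ^ (α - 2) := Real.rpow_nonneg hy0.le _
      positivity) x
  have hHint : Integrable H := by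
    refine IntegrableOn.integrable_indicator ?_ measurableSet_Ioc
    have h1 : IntegrableOn (fun t : ℝ => t ^ α) (Set.Ioc 0 (3 * a)) :=
      (intervalIntegral.intervalIntegrable_rpow' (a := 0) (b := 3 * a) hα₁).1
    exact h1.const_mul _
  have hGint : Integrable G := by
    refine IntegrableOn.integrable_indicator ?_ measurableSet_Ioi
    exact (integrableOn_Ioi_rpow_of_lt (by linarith) (by positivity)).const_mul _
  have iA : Integrable (fun q => H (q - p)) := hHint.comp_sub_right p
  have iB : Integrable (fun q => H (p - q)) := by
    have h1 := (hHint.comp_neg).comp_sub_right p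
    simpa [neg_sub] using h1
  have iD : Integrable (fun q => G (-q)) := hGint.comp_neg
  have iE : Integrable (fun q => (8 / δ ^ 2) * bhat (q - p)) :=
    (h_int.comp_sub_right p).const_mul _
  have hgint : Integrable (fun q =>
      H (q - p) + H (p - q) + G q + G (-q) + (8 / δ ^ 2) * bhat (q - p)) :=
    ((((iA.add iB).add hGint).add iD).add iE)
  -- pointwise (a.e.) bound
  have hae : ∀ᵐ q : ℝ, q ≠ p := by
    rw [MeasureTheory.ae_iff]
    simpa using measure_singleton (p : ℝ)
  have hfg : ∀ q : ℝ, q ≠ p → bhat (q - p) / (l + q ^ 2 / 2) ≤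
      H (q - p) + H (p - q) + G q + G (-q) + (8 / δ ^ 2) * bhat (q - p) := by
    intro q hqp
    have hden1 : (0:ℝ) < l + q ^ 2 / 2 := by positivity
    have hbnn : 0 ≤ (8 / δ ^ 2) * bhat (q - p) := by
      have := h_nonneg (q - p); positivity
    rcases le_or_gt |q| (2 * a) with h1 | h1
    · -- inner region
      have hqpd : |q - p| < 3 * a := by
        have htri := abs_sub q p
        linarith
      have hδqp : |q - p| < δ := by linarith
      have hb := h_bound (q - p) hδqp
      have key : bhat (q - p) / (l + q ^ 2 / 2) ≤ 2 * C₁ / l * |q - p| ^ α := by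
        have hnum : 0 ≤ 2 * C₁ * |q - p| ^ α := by
          have : (0:ℝ) ≤ |q - p| ^ α := Real.rpow_nonneg (abs_nonneg _) α
          positivity
        calc bhat (q - p) / (l + q ^ 2 / 2) ≤ (2 * C₁ * |q - p| ^ α) / l := by
              apply div_le_div₀ hnum hb hl
              nlinarith [sq_nonneg q]
          _ = 2 * C₁ / l * |q - p| ^ α := by ring
      have key2 : 2 * C₁ / l * |q - p| ^ α ≤ H (q - p) + H (p - q) := by
        rcases lt_or_gt_of_ne (sub_ne_zero.mpr hqp) with hneg | hpos
        · -- q - p < 0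
          have hmem : p - q ∈ Set.Ioc 0 (3 * a) := by
            constructor
            · linarith
            · have : |q - p| = p - q := by rw [abs_of_neg hneg]; ring
              linarith
          have : H (p - q) = 2 * C₁ / l * (p - q) ^ α := Set.indicator_of_mem hmem _
          rw [this, show |q - p| = p - q by rw [abs_of_neg hneg]; ring]
          linarith [hHnn (q - p)]
        · -- 0 < q - p
          have hmem : q - p ∈ Set.Ioc 0 (3 * a) := by
            constructor
            · linarith
            · have : |q - p| = q - p := abs_of_pos hpos
              linarith
          have : H (q - p) = 2 * C₁ / l * (q - p) ^ α := Set.indicator_of_mem hmem _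
          rw [this, abs_of_pos hpos]
          linarith [hHnn (p - q)]
      have := le_trans key key2
      linarith [hGnn q, hGnn (-q)]
    · rcases le_or_gt |q| (δ / 2) with h2 | h2
      · -- middle region
        have hq0 : (0:ℝ) < |q| := lt_trans (by positivity) h1
        have hpa : |p| < a := hp
        have hlow : |q| / 2 ≤ |q - p| := by
          have h3 := abs_sub_abs_le_abs_sub q p
          linarith
        have hup : |q - p| ≤ 3 / 2 * |q| := by
          have htri := abs_sub q p
          linarith
        have hδ' : |q - p| < δ := by linarith
        have hb := h_bound (q - p) hδ'
        have hqa : (0:ℝ) ≤ |q| ^ α := Real.rpow_nonneg (abs_nonneg q) α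
        have hpow : |q - p| ^ α ≤ 2 * |q| ^ α := by
          rcases le_or_gt 0 α with hα0 | hα0
          · calc |q - p| ^ α ≤ (3 / 2 * |q|) ^ α :=
                  Real.rpow_le_rpow (abs_nonneg _) hup hα0
              _ = (3 / 2 : ℝ) ^ α * |q| ^ α := Real.mul_rpow (by norm_num) (abs_nonneg _)
              _ ≤ 2 * |q| ^ α := by
                  have h32 : (3 / 2 : ℝ) ^ α ≤ (3 / 2 : ℝ) ^ (1 : ℝ) :=
                    Real.rpow_le_rpow_of_exponent_le (by norm_num) hα₂.le
                  rw [Real.rpow_one] at h32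
                  nlinarith
          · calc |q - p| ^ α ≤ (|q| / 2) ^ α :=
                  Real.rpow_le_rpow_of_nonpos (by positivity) hlow hα0.le
              _ = |q| ^ α / (2:ℝ) ^ α := Real.div_rpow (abs_nonneg _) (by norm_num) α
              _ = |q| ^ α * (2:ℝ) ^ (-α) := by
                  rw [Real.rpow_neg (by norm_num), div_eq_mul_inv]
              _ ≤ 2 * |q| ^ α := by
                  have h2a : (2:ℝ) ^ (-α) ≤ (2:ℝ) ^ (1 : ℝ) :=
                    Real.rpow_le_rpow_of_exponent_le (by norm_num) (by linarith)
                  rw [Real.rpow_one] at h2a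
                  nlinarith
        have key : bhat (q - p) / (l + q ^ 2 / 2) ≤ 8 * C₁ * |q| ^ (α - 2) := by
          have hq00 : q ≠ 0 := abs_pos.mp hq0
          have hden2 : (0:ℝ) < q ^ 2 / 2 := by positivity
          have hb2 : bhat (q - p) ≤ 4 * C₁ * |q| ^ α := by
            have : (0:ℝ) ≤ |q - p| ^ α := Real.rpow_nonneg (abs_nonneg _) α
            nlinarith
          have hnum4 : (0:ℝ) ≤ 4 * C₁ * |q| ^ α := by
            have h4 : (0:ℝ) ≤ 4 * C₁ := by linarith
            exact mul_nonneg h4 hqa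
          calc bhat (q - p) / (l + q ^ 2 / 2) ≤ (4 * C₁ * |q| ^ α) / (q ^ 2 / 2) := by
                apply div_le_div₀ hnum4 hb2 hden2 (by linarith)
            _ = 8 * C₁ * (|q| ^ α / q ^ 2) := by ring
            _ = 8 * C₁ * |q| ^ (α - 2) := by
                rw [show q ^ 2 = |q| ^ ((2:ℕ):ℝ) by rw [Real.rpow_natCast]; rw [sq_abs],
                  ← Real.rpow_sub hq0]
                norm_num
        have key2 : 8 * C₁ * |q| ^ (α - 2) ≤ G q + G (-q) := by
          rcases abs_cases q with ⟨hq1, _⟩ | ⟨hq1, _⟩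
          · have hmem : q ∈ Set.Ioi (2 * a) := by
              simpa only [Set.mem_Ioi, hq1] using h1
            have hGq : G q = 8 * C₁ * q ^ (α - 2) := Set.indicator_of_mem hmem _
            rw [hq1, hGq]
            linarith [hGnn (-q)]
          · have hmem : -q ∈ Set.Ioi (2 * a) := by
              simpa only [Set.mem_Ioi, hq1] using h1
            have hGq : G (-q) = 8 * C₁ * (-q) ^ (α - 2) := Set.indicator_of_mem hmem _
            rw [hq1, hGq]
            linarith [hGnn q]
        have := le_trans key key2
        linarith [hHnn (q - p), hHnn (p - q)]
      · -- outer region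
        have hq2 : δ ^ 2 / 4 ≤ q ^ 2 := by
          have : (δ / 2) ^ 2 ≤ |q| ^ 2 := by
            apply sq_le_sq' <;> [linarith [abs_nonneg q]; linarith]
          rw [sq_abs] at this; nlinarith
        have key : bhat (q - p) / (l + q ^ 2 / 2) ≤ (8 / δ ^ 2) * bhat (q - p) := by
          rw [show (8 / δ ^ 2) * bhat (q - p) = bhat (q - p) / (δ ^ 2 / 8) by
            field_simp]
          apply div_le_div₀ (h_nonneg _) le_rfl (by positivity) (by linarith)
        linarith [hHnn (q - p), hHnn (p - q), hGnn q, hGnn (-q)]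
  have hmono : (∫ q : ℝ, bhat (q - p) / (l + q ^ 2 / 2)) ≤
      ∫ q : ℝ, (H (q - p) + H (p - q) + G q + G (-q) + (8 / δ ^ 2) * bhat (q - p)) := by
    apply integral_mono_of_nonneg
    · exact Filter.Eventually.of_forall fun q => by
        have := h_nonneg (q - p)
        positivity
    · exact hgint
    · exact hae.mono hfg
  -- compute the integral of the majorant
  have hIH : ∫ t, H t = 2 * C₁ / l * ((3 * a) ^ (α + 1) / (α + 1)) := by
    rw [hH_def, MeasureTheory.integral_indicator measurableSet_Ioc,
      ← intervalIntegral.integral_of_le (by positivity : (0:ℝ) ≤ 3 * a),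
      intervalIntegral.integral_const_mul, integral_rpow (Or.inl hα₁),
      Real.zero_rpow (by linarith : α + 1 ≠ 0)]
    ring
  have hIG : ∫ x, G x = 8 * C₁ * ((2 * a) ^ (α - 1) / (1 - α)) := by
    rw [hG_def, MeasureTheory.integral_indicator measurableSet_Ioi, integral_const_mul,
      integral_Ioi_rpow_of_lt (by linarith) (by positivity),
      show α - 2 + 1 = α - 1 by ring]
    have h1α : 1 - α ≠ 0 := by linarith
    have h1α' : α - 1 ≠ 0 := by linarith
    field_simp
    ring
  have hIg : (∫ q : ℝ, (H (q - p) + H (p - q) + G q + G (-q)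
        + (8 / δ ^ 2) * bhat (q - p))) =
      2 * (∫ t, H t) + 2 * (∫ x, G x) + (8 / δ ^ 2) * ∫ x, bhat x := by
    have s5 : (∫ q : ℝ, (H (q - p) + H (p - q) + G q + G (-q)
          + (8 / δ ^ 2) * bhat (q - p))) =
        (∫ q : ℝ, (H (q - p) + H (p - q) + G q + G (-q)))
          + ∫ q : ℝ, (8 / δ ^ 2) * bhat (q - p) :=
      integral_add (((iA.add iB).add hGint).add iD) iE
    have s4 : (∫ q : ℝ, (H (q - p) + H (p - q) + G q + G (-q))) =
        (∫ q : ℝ, (H (q - p) + H (p - q) + G q)) + ∫ q : ℝ, G (-q) :=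
      integral_add ((iA.add iB).add hGint) iD
    have s3 : (∫ q : ℝ, (H (q - p) + H (p - q) + G q)) =
        (∫ q : ℝ, (H (q - p) + H (p - q))) + ∫ q : ℝ, G q :=
      integral_add (iA.add iB) hGint
    have s2 : (∫ q : ℝ, (H (q - p) + H (p - q))) =
        (∫ q : ℝ, H (q - p)) + ∫ q : ℝ, H (p - q) :=
      integral_add iA iB
    rw [s5, s4, s3, s2]
    have e1 : (∫ q : ℝ, H (q - p)) = ∫ t, H t := integral_sub_right_eq_self H p
    have e2 : (∫ q : ℝ, H (p - q)) = ∫ t, H t := by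
      have h1 : (fun q : ℝ => H (p - q)) = (fun q : ℝ => (fun t => H (-t)) (q - p)) := by
        funext q; simp [neg_sub]
      rw [h1, integral_sub_right_eq_self (fun t => H (-t)) p, integral_neg_eq_self]
    have e3 : (∫ q : ℝ, G (-q)) = ∫ x, G x := integral_neg_eq_self G volume
    have e4 : (∫ q : ℝ, (8 / δ ^ 2) * bhat (q - p)) = (8 / δ ^ 2) * ∫ x, bhat x := by
      rw [integral_const_mul, integral_sub_right_eq_self bhat p]
    rw [e1, e2, e3, e4]; ring
  -- exponent arithmetic
  set L := l ^ ((α - 1) / 2) with hL_def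
  have hLpos : 0 < L := Real.rpow_pos_of_pos hl _
  have hL1 : 1 ≤ L :=
    Real.one_le_rpow_of_pos_of_le_one_of_nonpos hl hl1.le (by linarith)
  have haL : a ^ (α - 1) = L := by
    rw [hL_def, ha_def, Real.sqrt_eq_rpow, ← Real.rpow_mul hl.le,
      show 1 / 2 * (α - 1) = (α - 1) / 2 by ring]
  have haL2 : a ^ (α + 1) = l * L := by
    rw [show α + 1 = (α - 1) + 2 by ring, Real.rpow_add ha,
      show (2:ℝ) = ((2:ℕ):ℝ) by norm_num, Real.rpow_natCast, hal, haL]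
    ring
  have h3pos : (0:ℝ) < (3:ℝ) ^ (α + 1) := Real.rpow_pos_of_pos (by norm_num) _
  have h2pos : (0:ℝ) < (2:ℝ) ^ (α - 1) := Real.rpow_pos_of_pos (by norm_num) _
  have hkey1 : 2 * C₁ / l * ((3 * a) ^ (α + 1) / (α + 1)) =
      2 * C₁ * 3 ^ (α + 1) / (α + 1) * L := by
    rw [Real.mul_rpow (by norm_num) ha.le, haL2]
    have hl' : l ≠ 0 := ne_of_gt hl
    have hα1' : α + 1 ≠ 0 := by linarith
    field_simp
  have hkey2 : 8 * C₁ * ((2 * a) ^ (α - 1) / (1 - α)) =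
      8 * C₁ * 2 ^ (α - 1) / (1 - α) * L := by
    rw [Real.mul_rpow (by norm_num) ha.le, haL]
    ring
  -- put everything together
  have hI0 : 0 ≤ ∫ q : ℝ, bhat (q - p) / (l + q ^ 2 / 2) :=
    integral_nonneg fun q => by
      have := h_nonneg (q - p); positivity
  have hpref : (Real.sqrt (2 * Real.pi))⁻¹ ≤ 1 := by
    have h2π : 1 ≤ Real.sqrt (2 * Real.pi) := by
      rw [show (1:ℝ) = Real.sqrt 1 from (Real.sqrt_one).symm]
      exact Real.sqrt_le_sqrt (by nlinarith [Real.pi_gt_three])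
    exact inv_le_one_of_one_le₀ h2π
  have hfinal : 2 * (∫ t, H t) + 2 * (∫ x, G x) + (8 / δ ^ 2) * ∫ x, bhat x ≤
      (4 * C₁ * 3 ^ (α + 1) / (α + 1) + 16 * C₁ * 2 ^ (α - 1) / (1 - α)
        + (8 / δ ^ 2) * ∫ x, bhat x) * L := by
    rw [hIH, hIG, hkey1, hkey2]
    have hc3 : 0 ≤ (8 / δ ^ 2) * ∫ x, bhat x := by positivity
    have hrw : (4 * C₁ * 3 ^ (α + 1) / (α + 1) + 16 * C₁ * 2 ^ (α - 1) / (1 - α)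
        + (8 / δ ^ 2) * ∫ x, bhat x) * L
      = 2 * (2 * C₁ * 3 ^ (α + 1) / (α + 1) * L) + 2 * (8 * C₁ * 2 ^ (α - 1) / (1 - α) * L)
        + ((8 / δ ^ 2) * ∫ x, bhat x) * L := by ring
    rw [hrw]
    have hle : (8 / δ ^ 2) * ∫ x, bhat x ≤ ((8 / δ ^ 2) * ∫ x, bhat x) * L :=
      le_mul_of_one_le_right hc3 hL1
    linarith
  calc (Real.sqrt (2 * Real.pi))⁻¹ * ∫ q : ℝ, bhat (q - p) / (l + q ^ 2 / 2)
      ≤ 1 * ∫ q : ℝ, bhat (q - p) / (l + q ^ 2 / 2) :=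
        mul_le_mul_of_nonneg_right hpref hI0
    _ = ∫ q : ℝ, bhat (q - p) / (l + q ^ 2 / 2) := one_mul _
    _ ≤ ∫ q : ℝ, (H (q - p) + H (p - q) + G q + G (-q)
        + (8 / δ ^ 2) * bhat (q - p)) := hmono
    _ = 2 * (∫ t, H t) + 2 * (∫ x, G x) + (8 / δ ^ 2) * ∫ x, bhat x := hIg
    _ ≤ _ := hfinal
end
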